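/- arXiv:2203.01770 — 2 statements merged into one kernel-verified Lean document; each statement's English description precedes it below -/
import Mathlib

section
/- The difference between the inverse modulation and the original modulation satisfies ‖γ̃ − γ‖_{L^p(ℝ)}^p ≤ ‖γ‖_{L^∞}^p · ∫_0^1 ‖γ' ∘ (Id + t γ̃)‖_{L^p(ℝ)}^p dt, and consequently ‖γ̃ − γ‖_{L^p(ℝ)} ≤ ‖γ‖_{L^∞} (1 + ‖γ'‖_{L^∞})^{1/p} ‖γ'‖_{L^p(ℝ)} for 1 ≤ p < ∞. -/
open Real MeasureTheory
open scoped ENNReal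

lemma jensen_aux {μ : Measure ℝ} [IsProbabilityMeasure μ] {f : ℝ → ℝ≥0∞}
    (hf : AEMeasurable f μ) {p : ℝ} (hp : 1 ≤ p) :
    (∫⁻ t, f t ∂μ) ^ p ≤ ∫⁻ t, f t ^ p ∂μ := by
  rcases eq_or_lt_of_le hp with h1 | h1
  · simp [← h1]
  · have hpq := Real.HolderConjugate.conjExponent h1
    have h0 : (0:ℝ) < p := lt_trans one_pos h1
    have H := ENNReal.lintegral_mul_le_Lp_mul_Lq μ hpq hf
      (aemeasurable_const (b := (1:ℝ≥0∞)))
    simp only [Pi.mul_apply, mul_one, ENNReal.one_rpow, lintegral_one, measure_univ] at H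
    calc (∫⁻ t, f t ∂μ) ^ p ≤ ((∫⁻ t, f t ^ p ∂μ) ^ (1/p)) ^ p := by
          refine ENNReal.rpow_le_rpow ?_ h0.le
          simpa using H
      _ = ∫⁻ t, f t ^ p ∂μ := by
          rw [← ENNReal.rpow_mul, one_div_mul_cancel (ne_of_gt h0), ENNReal.rpow_one]

lemma cov_aux {s : Set ℝ} {f : ℝ → ℝ} {f' : ℝ → ℝ}
    (hs : MeasurableSet s) (hf' : ∀ x ∈ s, HasDerivWithinAt f (f' x) s x)
    (hf : Set.InjOn f s) (g : ℝ → ℝ≥0∞) :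
    ∫⁻ x in f '' s, g x = ∫⁻ x in s, ENNReal.ofReal |f' x| * g (f x) := by
  simpa only [ContinuousLinearMap.det_toSpanSingleton] using
    MeasureTheory.lintegral_image_eq_lintegral_abs_det_fderiv_mul volume hs
      (fun x hx => (hf' x hx).hasFDerivWithinAt) hf g


/-- `‖γ̃ - γ‖_{L^p}^p ≤ ‖γ‖_∞^p ∫_0^1 ‖γ' ∘ (Id + t γ̃)‖_{L^p}^p dt`, and consequently
`‖γ̃ - γ‖_{L^p} ≤ ‖γ‖_∞ (1 + ‖γ'‖_∞)^{1/p} ‖γ'‖_{L^p}`. -/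
theorem stmt_6 (γ γt : ℝ → ℝ) (hγ : ContDiff ℝ 1 γ)
    (M : ℝ) (hbdd : ∀ x, |γ x| ≤ M)
    (c : ℝ) (hc1 : c < 1) (hder : ∀ x, |deriv γ x| ≤ c)
    (hinv₁ : ∀ x : ℝ, (x - γ x) + γt (x - γ x) = x)
    (hinv₂ : ∀ x : ℝ, (x + γt x) - γ (x + γt x) = x)
    (p : ℝ) (hp : 1 ≤ p)
    (hγp : MemLp (deriv γ) (ENNReal.ofReal p) volume) :
    (∫⁻ x : ℝ, (ENNReal.ofReal |γt x - γ x|) ^ p ∂volume)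
      ≤ ENNReal.ofReal (M ^ p) *
        ∫⁻ t in Set.Icc (0:ℝ) 1,
          (∫⁻ x : ℝ, (ENNReal.ofReal |deriv γ (x + t * γt x)|) ^ p ∂volume) ∂volume
    ∧ eLpNorm (fun x => γt x - γ x) (ENNReal.ofReal p) volume
      ≤ ENNReal.ofReal (M * (1 + c) ^ (1 / p)) *
          eLpNorm (deriv γ) (ENNReal.ofReal p) volume := by
  have hc0 : (0:ℝ) ≤ c := le_trans (abs_nonneg _) (hder 0)
  have hM0 : (0:ℝ) ≤ M := le_trans (abs_nonneg _) (hbdd 0)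
  have hp0 : (0:ℝ) < p := lt_of_lt_of_le one_pos hp
  have hγdiff : Differentiable ℝ γ := hγ.differentiable one_ne_zero
  have hγ'cont : Continuous (deriv γ) := hγ.continuous_deriv le_rfl
  set ψ : ℝ → ℝ := fun x => x + γt x with hψdef
  have hγψ : ∀ x, γ (ψ x) = γt x := fun x => by have := hinv₂ x; simp only [hψdef]; linarith
  have hγtbdd : ∀ x, |γt x| ≤ M := fun x => (hγψ x) ▸ hbdd (ψ x)
  have hφderiv : ∀ x, HasDerivAt (fun y => y - γ y) (1 - deriv γ x) x :=
    fun x => (hasDerivAt_id x).sub (hγdiff x).hasDerivAt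
  have hone_sub : ∀ x, 0 < 1 - deriv γ x := by
    intro x
    have := (abs_le.1 (hder x)).2
    linarith
  have hφmono : StrictMono (fun y => y - γ y) := by
    apply strictMono_of_deriv_pos
    intro x
    rw [(hφderiv x).deriv]
    exact hone_sub x
  have hψmono : StrictMono ψ := by
    intro a b hab
    by_contra h
    push_neg at h
    have := hφmono.monotone h
    simp only [hψdef, hinv₂] at this
    exact absurd (le_antisymm this hab.le) (by intro heq; exact lt_irrefl _ (heq ▸ hab))
  have hψsurj : Function.Surjective ψ := fun y => ⟨y - γ y, hinv₁ y⟩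
  have hψcont : Continuous ψ := by
    have h := (StrictMono.orderIsoOfSurjective ψ hψmono hψsurj).continuous
    rwa [StrictMono.coe_orderIsoOfSurjective] at h
  have hγtcont : Continuous γt := by
    have : γt = fun x => ψ x - x := by funext x; simp [hψdef]
    rw [this]; exact hψcont.sub continuous_id
  have hψderiv : ∀ a, HasDerivAt ψ ((1 - deriv γ (ψ a))⁻¹) a := by
    intro a
    exact HasDerivAt.of_local_left_inverse hψcont.continuousAt
      (hφderiv (ψ a)) (ne_of_gt (hone_sub (ψ a))) (Filter.Eventually.of_forall hinv₂)
  have hγtderiv : ∀ a, HasDerivAt γt ((1 - deriv γ (ψ a))⁻¹ - 1) a := by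
    intro a
    have h := (hψderiv a).sub (hasDerivAt_id a)
    have he : (ψ - id : ℝ → ℝ) = γt := by funext x; simp [hψdef]
    rwa [he] at h
  set D : ℝ → ℝ → ℝ := fun t x => 1 + t * ((1 - deriv γ (ψ x))⁻¹ - 1) with hDdef
  have hφtderiv : ∀ t x, HasDerivAt (fun y => y + t * γt y) (D t x) x := by
    intro t x
    exact (hasDerivAt_id x).add ((hγtderiv x).const_mul t)
  have hDpos : ∀ t ∈ Set.Icc (0:ℝ) 1, ∀ x, (1 + c)⁻¹ ≤ D t x := by
    rintro t ⟨ht0, ht1⟩ x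
    set g := deriv γ (ψ x) with hg
    have hgc : -c ≤ g ∧ g ≤ c := abs_le.1 (hder (ψ x))
    have h1g : 0 < 1 - g := hone_sub (ψ x)
    have h1c : (0:ℝ) < 1 + c := by linarith
    have hr : (1 + c)⁻¹ - 1 ≤ (1 - g)⁻¹ - 1 := by
      have : (1:ℝ) - g ≤ 1 + c := by linarith [hgc.1]
      have := one_div_le_one_div_of_le h1g this
      simp only [one_div] at this
      linarith
    have hrneg : (1 + c)⁻¹ - 1 ≤ 0 := by
      have : (1:ℝ) ≤ 1 + c := by linarith
      have := inv_le_one_of_one_le₀ this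
      linarith
    have key : t * ((1 + c)⁻¹ - 1) ≤ t * ((1 - g)⁻¹ - 1) :=
      mul_le_mul_of_nonneg_left hr ht0
    have key2 : (1 + c)⁻¹ - 1 ≤ t * ((1 + c)⁻¹ - 1) := by
      nlinarith
    simp only [hDdef]
    linarith
  set g0 : ℝ → ℝ≥0∞ := fun y => (ENNReal.ofReal |deriv γ y|) ^ p with hg0def
  have h1c : (0:ℝ) < 1 + c := by linarith
  have keyCOV : ∀ t ∈ Set.Icc (0:ℝ) 1,
      (∫⁻ x, g0 (x + t * γt x)) ≤ ENNReal.ofReal (1 + c) * ∫⁻ y, g0 y := by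
    intro t ht
    set φt : ℝ → ℝ := fun y => y + t * γt y with hφtdef
    have hmono : StrictMono φt := by
      apply strictMono_of_deriv_pos
      intro x
      rw [(hφtderiv t x).deriv]
      exact lt_of_lt_of_le (inv_pos.2 h1c) (hDpos t ht x)
    have hcov := cov_aux (f := φt) (f' := D t) MeasurableSet.univ
      (fun x _ => (hφtderiv t x).hasDerivWithinAt) hmono.injective.injOn g0
    rw [Measure.restrict_univ] at hcov
    have h1 : ENNReal.ofReal ((1 + c)⁻¹) * (∫⁻ x, g0 (φt x))
        ≤ ∫⁻ x in φt '' Set.univ, g0 x := by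
      rw [hcov, ← lintegral_const_mul' _ _ ENNReal.ofReal_ne_top]
      apply lintegral_mono
      intro x
      apply mul_le_mul_left
      apply ENNReal.ofReal_le_ofReal
      exact le_trans (hDpos t ht x) (le_abs_self _)
    have h2 : ENNReal.ofReal ((1 + c)⁻¹) * (∫⁻ x, g0 (φt x)) ≤ ∫⁻ y, g0 y :=
      le_trans h1 (setLIntegral_le_lintegral _ _)
    have h3 := mul_le_mul_right h2 (ENNReal.ofReal (1 + c))
    rwa [← mul_assoc, ← ENNReal.ofReal_mul h1c.le,
      mul_inv_cancel₀ (ne_of_gt h1c), ENNReal.ofReal_one, one_mul] at h3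
  have probIcc : IsProbabilityMeasure (volume.restrict (Set.Icc (0:ℝ) 1)) := by
    constructor
    simp [Real.volume_Icc]
  have keyFTC : ∀ x, |γt x - γ x| ≤ M * ∫ s in (0:ℝ)..1, |deriv γ (x + s * γt x)| := by
    intro x
    have hinner : ∀ s : ℝ, HasDerivAt (fun s : ℝ => x + s * γt x) (γt x) s := by
      intro s
      simpa using ((hasDerivAt_id s).mul_const (γt x)).const_add x
    have hF : ∀ s : ℝ, HasDerivAt (fun s : ℝ => γ (x + s * γt x))
        (deriv γ (x + s * γt x) * γt x) s := by
      intro s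
      exact ((hγdiff _).hasDerivAt).comp s (hinner s)
    have hcont : Continuous fun s : ℝ => deriv γ (x + s * γt x) * γt x := by
      apply Continuous.mul _ continuous_const
      exact hγ'cont.comp (continuous_const.add (continuous_id.mul continuous_const))
    have heq : γt x - γ x = ∫ s in (0:ℝ)..1, deriv γ (x + s * γt x) * γt x := by
      have h := intervalIntegral.integral_eq_sub_of_hasDerivAt
        (fun s _ => hF s) (hcont.intervalIntegrable 0 1)
      rw [h]
      have h1 : x + (1:ℝ) * γt x = ψ x := by simp [hψdef]
      rw [h1, hγψ]
      simp
    rw [heq]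
    calc |∫ s in (0:ℝ)..1, deriv γ (x + s * γt x) * γt x|
        ≤ ∫ s in (0:ℝ)..1, |deriv γ (x + s * γt x) * γt x| :=
          intervalIntegral.abs_integral_le_integral_abs zero_le_one
      _ ≤ ∫ s in (0:ℝ)..1, M * |deriv γ (x + s * γt x)| := by
          apply intervalIntegral.integral_mono_on zero_le_one
          · exact (hcont.abs).intervalIntegrable 0 1
          · exact (continuous_const.mul ((hγ'cont.comp
              (continuous_const.add (continuous_id.mul continuous_const))).abs)).intervalIntegrable 0 1
          · intro s _
            rw [abs_mul, mul_comm]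
            exact mul_le_mul_of_nonneg_right (hγtbdd x) (abs_nonneg _)
      _ = M * ∫ s in (0:ℝ)..1, |deriv γ (x + s * γt x)| := by
          rw [intervalIntegral.integral_const_mul]
  have key1 : ∀ x, (ENNReal.ofReal |γt x - γ x|) ^ p
      ≤ ENNReal.ofReal (M ^ p) *
        ∫⁻ t in Set.Icc (0:ℝ) 1, (ENNReal.ofReal |deriv γ (x + t * γt x)|) ^ p := by
    intro x
    have hcont2 : Continuous fun s : ℝ => |deriv γ (x + s * γt x)| :=
      (hγ'cont.comp (continuous_const.add (continuous_id.mul continuous_const))).abs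
    have step2 : ENNReal.ofReal (∫ s in (0:ℝ)..1, |deriv γ (x + s * γt x)|)
        ≤ ∫⁻ t in Set.Icc (0:ℝ) 1, ENNReal.ofReal |deriv γ (x + t * γt x)| := by
      rw [intervalIntegral.integral_of_le zero_le_one,
        ← Measure.restrict_congr_set Ioc_ae_eq_Icc]
      rw [ofReal_integral_eq_lintegral_ofReal hcont2.integrableOn_Ioc
        (Filter.Eventually.of_forall fun s => abs_nonneg _)]
    have step1 : ENNReal.ofReal |γt x - γ x|
        ≤ ENNReal.ofReal M *
          ENNReal.ofReal (∫ s in (0:ℝ)..1, |deriv γ (x + s * γt x)|) := by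
      rw [← ENNReal.ofReal_mul hM0]
      exact ENNReal.ofReal_le_ofReal (keyFTC x)
    have step3 : (∫⁻ t in Set.Icc (0:ℝ) 1, ENNReal.ofReal |deriv γ (x + t * γt x)|) ^ p
        ≤ ∫⁻ t in Set.Icc (0:ℝ) 1, (ENNReal.ofReal |deriv γ (x + t * γt x)|) ^ p := by
      apply jensen_aux _ hp
      exact hcont2.measurable.ennreal_ofReal.aemeasurable
    calc (ENNReal.ofReal |γt x - γ x|) ^ p
        ≤ (ENNReal.ofReal M *
            ENNReal.ofReal (∫ s in (0:ℝ)..1, |deriv γ (x + s * γt x)|)) ^ p :=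
          ENNReal.rpow_le_rpow step1 hp0.le
      _ = (ENNReal.ofReal M) ^ p *
            (ENNReal.ofReal (∫ s in (0:ℝ)..1, |deriv γ (x + s * γt x)|)) ^ p :=
          ENNReal.mul_rpow_of_nonneg _ _ hp0.le
      _ ≤ (ENNReal.ofReal M) ^ p *
            (∫⁻ t in Set.Icc (0:ℝ) 1, ENNReal.ofReal |deriv γ (x + t * γt x)|) ^ p :=
          mul_le_mul_right (ENNReal.rpow_le_rpow step2 hp0.le) _
      _ ≤ (ENNReal.ofReal M) ^ p *
            ∫⁻ t in Set.Icc (0:ℝ) 1, (ENNReal.ofReal |deriv γ (x + t * γt x)|) ^ p :=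
          mul_le_mul_right step3 _
      _ = ENNReal.ofReal (M ^ p) *
            ∫⁻ t in Set.Icc (0:ℝ) 1, (ENNReal.ofReal |deriv γ (x + t * γt x)|) ^ p := by
          rw [ENNReal.ofReal_rpow_of_nonneg hM0 hp0.le]
  have measF : AEMeasurable
      (Function.uncurry fun (x t : ℝ) => (ENNReal.ofReal |deriv γ (x + t * γt x)|) ^ p)
      (volume.prod (volume.restrict (Set.Icc (0:ℝ) 1))) := by
    have hc : Continuous fun q : ℝ × ℝ => |deriv γ (q.1 + q.2 * γt q.1)| :=
      (hγ'cont.comp (continuous_fst.add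
        (continuous_snd.mul (hγtcont.comp continuous_fst)))).abs
    exact ((ENNReal.continuous_rpow_const.measurable).comp
      hc.measurable.ennreal_ofReal).aemeasurable
  have part1 : (∫⁻ x : ℝ, (ENNReal.ofReal |γt x - γ x|) ^ p ∂volume)
      ≤ ENNReal.ofReal (M ^ p) *
        ∫⁻ t in Set.Icc (0:ℝ) 1,
          (∫⁻ x : ℝ, (ENNReal.ofReal |deriv γ (x + t * γt x)|) ^ p ∂volume) ∂volume := by
    calc (∫⁻ x : ℝ, (ENNReal.ofReal |γt x - γ x|) ^ p ∂volume)
        ≤ ∫⁻ x : ℝ, ENNReal.ofReal (M ^ p) *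
            ∫⁻ t in Set.Icc (0:ℝ) 1, (ENNReal.ofReal |deriv γ (x + t * γt x)|) ^ p ∂volume
              ∂volume := lintegral_mono key1
      _ = ENNReal.ofReal (M ^ p) * ∫⁻ x : ℝ,
            (∫⁻ t in Set.Icc (0:ℝ) 1, (ENNReal.ofReal |deriv γ (x + t * γt x)|) ^ p ∂volume)
              ∂volume := lintegral_const_mul' _ _ ENNReal.ofReal_ne_top
      _ = ENNReal.ofReal (M ^ p) *
            ∫⁻ t in Set.Icc (0:ℝ) 1,
              (∫⁻ x : ℝ, (ENNReal.ofReal |deriv γ (x + t * γt x)|) ^ p ∂volume) ∂volume := by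
          rw [lintegral_lintegral_swap measF]
  refine ⟨part1, ?_⟩
  -- second part
  set Jp : ℝ≥0∞ := ∫⁻ y, g0 y with hJpdef
  have hIccLe : (∫⁻ t in Set.Icc (0:ℝ) 1,
      (∫⁻ x : ℝ, (ENNReal.ofReal |deriv γ (x + t * γt x)|) ^ p ∂volume) ∂volume)
      ≤ ENNReal.ofReal (1 + c) * Jp := by
    have hb : ∀ t ∈ Set.Icc (0:ℝ) 1,
        (∫⁻ x : ℝ, (ENNReal.ofReal |deriv γ (x + t * γt x)|) ^ p ∂volume)
          ≤ ENNReal.ofReal (1 + c) * Jp := fun t ht => keyCOV t ht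
    calc (∫⁻ t in Set.Icc (0:ℝ) 1,
        (∫⁻ x : ℝ, (ENNReal.ofReal |deriv γ (x + t * γt x)|) ^ p ∂volume) ∂volume)
        ≤ ∫⁻ _ in Set.Icc (0:ℝ) 1, ENNReal.ofReal (1 + c) * Jp ∂volume :=
          setLIntegral_mono measurable_const hb
      _ = ENNReal.ofReal (1 + c) * Jp := by
          rw [setLIntegral_const]
          simp [Real.volume_Icc]
  have hbound : (∫⁻ x : ℝ, (ENNReal.ofReal |γt x - γ x|) ^ p ∂volume)
      ≤ ENNReal.ofReal (M ^ p) * (ENNReal.ofReal (1 + c) * Jp) :=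
    le_trans part1 (mul_le_mul_right hIccLe _)
  have hpne : ENNReal.ofReal p ≠ 0 := by
    simp [ENNReal.ofReal_eq_zero, not_le, hp0]
  have htoReal : (ENNReal.ofReal p).toReal = p := ENNReal.toReal_ofReal hp0.le
  have heLp1 : eLpNorm (fun x => γt x - γ x) (ENNReal.ofReal p) volume
      = (∫⁻ x : ℝ, (ENNReal.ofReal |γt x - γ x|) ^ p ∂volume) ^ (1/p) := by
    rw [eLpNorm_eq_lintegral_rpow_enorm_toReal hpne ENNReal.ofReal_ne_top, htoReal]
    simp_rw [Real.enorm_eq_ofReal_abs]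
  have heLp2 : eLpNorm (deriv γ) (ENNReal.ofReal p) volume = Jp ^ (1/p) := by
    rw [eLpNorm_eq_lintegral_rpow_enorm_toReal hpne ENNReal.ofReal_ne_top, htoReal, hJpdef, hg0def]
    simp_rw [Real.enorm_eq_ofReal_abs]
  rw [heLp1, heLp2]
  have hfinal : ((ENNReal.ofReal (M ^ p) * (ENNReal.ofReal (1 + c) * Jp)) : ℝ≥0∞) ^ (1/p)
      = ENNReal.ofReal (M * (1 + c) ^ (1/p)) * Jp ^ (1/p) := by
    rw [ENNReal.mul_rpow_of_nonneg _ _ (by positivity : (0:ℝ) ≤ 1/p),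
      ENNReal.mul_rpow_of_nonneg _ _ (by positivity : (0:ℝ) ≤ 1/p),
      ENNReal.ofReal_rpow_of_nonneg (Real.rpow_nonneg hM0 p) (by positivity),
      ENNReal.ofReal_rpow_of_nonneg h1c.le (by positivity),
      ← Real.rpow_mul hM0, mul_one_div_cancel (ne_of_gt hp0), Real.rpow_one,
      ← mul_assoc, ← ENNReal.ofReal_mul hM0]
  calc (∫⁻ x : ℝ, (ENNReal.ofReal |γt x - γ x|) ^ p ∂volume) ^ (1/p)
      ≤ (ENNReal.ofReal (M ^ p) * (ENNReal.ofReal (1 + c) * Jp)) ^ (1/p) :=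
        ENNReal.rpow_le_rpow hbound (by positivity)
    _ = ENNReal.ofReal (M * (1 + c) ^ (1/p)) * Jp ^ (1/p) := hfinal
end

section
/- One has the comparison bound ‖ψ − φ ∘ (Id + γ)‖_{L^p(ℝ)} ≤ (1 + ‖γ'‖_{L^∞})^{1/p} ‖ψ ∘ (Id − γ) − φ‖_{L^p(ℝ)} + ‖φ'‖_{L^∞} (1 + ‖γ'‖_{L^∞})^{1/p} ‖γ‖_{L^∞} ‖γ'‖_{L^p(ℝ)} for 1 ≤ p < ∞. -/
open Real MeasureTheory
open scoped ENNReal NNReal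

lemma my_cov {f f' : ℝ → ℝ} (hf' : ∀ x, HasDerivAt f (f' x) x)
    (hinj : Function.Injective f) (hsurj : Function.Surjective f) (g : ℝ → ℝ≥0∞) :
    ∫⁻ x, g x = ∫⁻ x, ENNReal.ofReal |f' x| * g (f x) := by
  have h := lintegral_image_eq_lintegral_abs_det_fderiv_mul volume MeasurableSet.univ
      (f' := fun x => ContinuousLinearMap.smulRight (1 : ℝ →L[ℝ] ℝ) (f' x))
      (fun x _ => (hf' x).hasFDerivAt.hasFDerivWithinAt) hinj.injOn g
  simpa [Set.image_univ, hsurj.range_eq, ContinuousLinearMap.det_toSpanSingleton] using h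

lemma my_jensen {α : Type*} [MeasurableSpace α] (μ : Measure α) (f : α → ℝ≥0∞)
    (hf : AEMeasurable f μ) {p : ℝ} (hp : 1 ≤ p) :
    (∫⁻ x, f x ∂μ) ^ p ≤ (μ Set.univ) ^ (p - 1) * ∫⁻ x, f x ^ p ∂μ := by
  rcases eq_or_lt_of_le hp with h1 | h1
  · simp [← h1]
  · have hpq := Real.HolderConjugate.conjExponent h1
    have h := ENNReal.lintegral_mul_le_Lp_mul_Lq μ hpq hf (aemeasurable_const (b := (1:ℝ≥0∞)))
    simp only [Pi.mul_apply, mul_one, ENNReal.one_rpow, lintegral_one, lintegral_const] at h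
    have hp0 : (0:ℝ) ≤ p := le_trans zero_le_one hp
    have h2 := ENNReal.rpow_le_rpow h hp0
    rw [ENNReal.mul_rpow_of_nonneg _ _ hp0, ← ENNReal.rpow_mul, ← ENNReal.rpow_mul] at h2
    have e1 : 1 / p * p = 1 := by field_simp
    have e2 : 1 / Real.conjExponent p * p = p - 1 := by
      rw [Real.conjExponent]
      field_simp
    rw [e1, e2, ENNReal.rpow_one] at h2
    calc (∫⁻ x, f x ∂μ) ^ p ≤ (∫⁻ x, f x ^ p ∂μ) * μ Set.univ ^ (p - 1) := h2
    _ = μ Set.univ ^ (p - 1) * ∫⁻ x, f x ^ p ∂μ := mul_comm _ _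

/-- Comparison bound:
`‖ψ - φ∘(Id+γ)‖_{L^p} ≤ (1+‖γ'‖_∞)^{1/p} ‖ψ∘(Id-γ) - φ‖_{L^p}
 + ‖φ'‖_∞ (1+‖γ'‖_∞)^{1/p} ‖γ‖_∞ ‖γ'‖_{L^p}`. -/
theorem stmt_8 (ψ φ γ γt : ℝ → ℝ)
    (hψ : Measurable ψ) (hφ : ContDiff ℝ 1 φ)
    (Cφ : ℝ) (hCφ : ∀ x, |deriv φ x| ≤ Cφ)
    (hγ : ContDiff ℝ 1 γ)
    (M : ℝ) (hbdd : ∀ x, |γ x| ≤ M)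
    (c : ℝ) (hc1 : c < 1) (hder : ∀ x, |deriv γ x| ≤ c)
    (hinv₁ : ∀ x : ℝ, (x - γ x) + γt (x - γ x) = x)
    (hinv₂ : ∀ x : ℝ, (x + γt x) - γ (x + γt x) = x)
    (p : ℝ) (hp : 1 ≤ p)
    (hγp : MemLp (deriv γ) (ENNReal.ofReal p) volume)
    (hfin : MemLp (fun x => ψ (x - γ x) - φ x) (ENNReal.ofReal p) volume) :
    eLpNorm (fun x => ψ x - φ (x + γ x)) (ENNReal.ofReal p) volume
      ≤ ENNReal.ofReal ((1 + c) ^ (1 / p)) *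
          eLpNorm (fun x => ψ (x - γ x) - φ x) (ENNReal.ofReal p) volume
        + ENNReal.ofReal (Cφ * (1 + c) ^ (1 / p) * M) *
            eLpNorm (deriv γ) (ENNReal.ofReal p) volume := by
  have hp0 : (0:ℝ) < p := lt_of_lt_of_le zero_lt_one hp
  set q : ℝ≥0∞ := ENNReal.ofReal p with hq
  have hq0 : q ≠ 0 := by
    simp only [hq, ne_eq, ENNReal.ofReal_eq_zero, not_le]; exact hp0
  have hqt : q ≠ ⊤ := ENNReal.ofReal_ne_top
  have hqr : q.toReal = p := ENNReal.toReal_ofReal hp0.le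
  have hq1 : 1 ≤ q := by rw [hq]; exact ENNReal.one_le_ofReal.2 hp
  have hc0 : 0 ≤ c := le_trans (abs_nonneg _) (hder 0)
  have hM0 : 0 ≤ M := le_trans (abs_nonneg _) (hbdd 0)
  have hCφ0 : 0 ≤ Cφ := le_trans (abs_nonneg _) (hCφ 0)
  have h1c : (0:ℝ) < 1 + c := by linarith
  have hγd : Differentiable ℝ γ := hγ.differentiable (by norm_num)
  have hγ'c : Continuous (deriv γ) := hγ.continuous_deriv le_rfl
  have hγc : Continuous γ := hγ.continuous
  have hφc : Continuous φ := hφ.continuous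
  have hgd : ∀ x : ℝ, HasDerivAt (fun x => x - γ x) (1 - deriv γ x) x :=
    fun x => (hasDerivAt_id x).sub (hγd x).hasDerivAt
  have hgpos : ∀ x, 0 < 1 - deriv γ x := fun x => by
    have := (abs_le.1 (hder x)).2; linarith
  have hgmono : StrictMono (fun x => x - γ x) :=
    strictMono_of_deriv_pos (fun x => by rw [(hgd x).deriv]; exact hgpos x)
  have hginj : Function.Injective (fun x => x - γ x) := hgmono.injective
  have hgsurj : Function.Surjective (fun x => x - γ x) := fun y => ⟨y + γt y, hinv₂ y⟩
  have hhmono : StrictMono (fun x : ℝ => x + γt x) := by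
    intro a b hab
    by_contra hle
    push_neg at hle
    have h2 := hgmono.le_iff_le.2 hle
    simp only [hinv₂] at h2
    exact absurd hab (not_lt.2 h2)
  have hhmeas : Measurable (fun x : ℝ => x + γt x) := hhmono.monotone.measurable
  have hAmeas : Measurable (fun x => ψ (x - γ x) - φ x) :=
    (hψ.comp (continuous_id.sub hγc).measurable).sub hφc.measurable
  -- change of variables
  have hCOV : ∀ G : ℝ → ℝ≥0∞, ∫⁻ x, G x = ∫⁻ x, ENNReal.ofReal |1 - deriv γ x| * G (x - γ x) :=
    fun G => my_cov hgd hginj hgsurj G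
  have hONE : ∀ F : ℝ → ℝ≥0∞,
      ∫⁻ x, ENNReal.ofReal |1 - deriv γ x| * F x ≤ ENNReal.ofReal (1 + c) * ∫⁻ x, F x := by
    intro F
    rw [← lintegral_const_mul' _ _ ENNReal.ofReal_ne_top]
    refine lintegral_mono fun x => mul_le_mul_left (ENNReal.ofReal_le_ofReal ?_) _
    have h2 := abs_le.1 (hder x)
    rw [abs_le]
    constructor <;> [linarith [h2.2]; linarith [h2.1]]
  -- split the function
  have hsplit : (fun x => ψ x - φ (x + γ x)) =
      (fun x => (fun y => ψ (y - γ y) - φ y) (x + γt x)) +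
        fun x => φ (x + γt x) - φ (x + γ x) := by
    funext x
    have h2 := hinv₂ x
    simp only [Pi.add_apply]
    rw [h2]
    ring
  have stepA : eLpNorm (fun x => (fun y => ψ (y - γ y) - φ y) (x + γt x)) q volume ≤
      ENNReal.ofReal ((1 + c) ^ (1 / p)) *
        eLpNorm (fun x => ψ (x - γ x) - φ x) q volume := by
    rw [eLpNorm_eq_lintegral_rpow_enorm_toReal hq0 hqt, eLpNorm_eq_lintegral_rpow_enorm_toReal hq0 hqt, hqr]
    have key : (∫⁻ x, (‖ψ ((x + γt x) - γ (x + γt x)) - φ (x + γt x)‖₊ : ℝ≥0∞) ^ p)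
        ≤ ENNReal.ofReal (1 + c) * ∫⁻ x, (‖ψ (x - γ x) - φ x‖₊ : ℝ≥0∞) ^ p := by
      calc (∫⁻ x, (‖ψ ((x + γt x) - γ (x + γt x)) - φ (x + γt x)‖₊ : ℝ≥0∞) ^ p)
          = ∫⁻ x, ENNReal.ofReal |1 - deriv γ x| *
            (‖ψ ((((x - γ x) + γt (x - γ x))) - γ ((x - γ x) + γt (x - γ x))) -
              φ ((x - γ x) + γt (x - γ x))‖₊ : ℝ≥0∞) ^ p :=
            hCOV (fun x => (‖ψ ((x + γt x) - γ (x + γt x)) - φ (x + γt x)‖₊ : ℝ≥0∞) ^ p)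
        _ = ∫⁻ x, ENNReal.ofReal |1 - deriv γ x| * (‖ψ (x - γ x) - φ x‖₊ : ℝ≥0∞) ^ p := by
            simp_rw [hinv₁]
        _ ≤ _ := hONE _
    calc (∫⁻ x, (‖(fun y => ψ (y - γ y) - φ y) (x + γt x)‖₊ : ℝ≥0∞) ^ p) ^ (1 / p)
        ≤ (ENNReal.ofReal (1 + c) * ∫⁻ x, (‖ψ (x - γ x) - φ x‖₊ : ℝ≥0∞) ^ p) ^ (1 / p) := by
          refine ENNReal.rpow_le_rpow ?_ (by positivity)
          simpa only [hinv₂] using key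
      _ = (ENNReal.ofReal (1 + c)) ^ (1 / p) *
            (∫⁻ x, (‖ψ (x - γ x) - φ x‖₊ : ℝ≥0∞) ^ p) ^ (1 / p) :=
          ENNReal.mul_rpow_of_nonneg _ _ (by positivity)
      _ = ENNReal.ofReal ((1 + c) ^ (1 / p)) *
            (∫⁻ x, (‖ψ (x - γ x) - φ x‖₊ : ℝ≥0∞) ^ p) ^ (1 / p) := by
          rw [← ENNReal.ofReal_rpow_of_pos h1c]
  have hFmeas : Measurable fun t => (‖deriv γ t‖₊ : ℝ≥0∞) ^ p :=
    hγ'c.measurable.nnnorm.coe_nnreal_ennreal.pow_const p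
  have lip : LipschitzWith Cφ.toNNReal φ :=
    lipschitzWith_of_nnnorm_deriv_le (hφ.differentiable (by norm_num)) fun x => by
      rw [← NNReal.coe_le_coe, coe_nnnorm, Real.norm_eq_abs, Real.coe_toNNReal _ hCφ0]
      exact hCφ x
  -- pointwise Hölder bound
  have pw : ∀ y : ℝ, (‖φ y - φ ((y - γ y) + γ (y - γ y))‖₊ : ℝ≥0∞) ^ p ≤
      (ENNReal.ofReal Cφ) ^ p * ((ENNReal.ofReal M) ^ (p - 1) *
        ∫⁻ t in Set.uIoc (y - γ y) y, (‖deriv γ t‖₊ : ℝ≥0∞) ^ p) := by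
    intro y
    set a := y - γ y with ha
    have e1 : |φ y - φ (a + γ a)| ≤ Cφ * |γ y - γ a| := by
      have hd := lip.dist_le_mul y (a + γ a)
      rw [Real.dist_eq, Real.dist_eq, Real.coe_toNNReal _ hCφ0] at hd
      have e : y - (a + γ a) = γ y - γ a := by rw [ha]; ring
      rwa [e] at hd
    have e2 : γ y - γ a = ∫ t in a..y, deriv γ t :=
      (intervalIntegral.integral_deriv_eq_sub (fun t _ => hγd t)
        (hγ'c.intervalIntegrable _ _)).symm
    have e3 : |γ y - γ a| ≤ ∫ t in Set.uIoc a y, |deriv γ t| := by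
      rw [e2]
      simpa [Real.norm_eq_abs] using
        intervalIntegral.norm_integral_le_integral_norm_uIoc (a := a) (b := y)
          (f := deriv γ) (μ := volume)
    have e4 : (‖φ y - φ (a + γ a)‖₊ : ℝ≥0∞) ≤
        ENNReal.ofReal Cφ * ∫⁻ t in Set.uIoc a y, (‖deriv γ t‖₊ : ℝ≥0∞) := by
      rw [← enorm_eq_nnnorm, ← ofReal_norm, Real.norm_eq_abs]
      calc ENNReal.ofReal |φ y - φ (a + γ a)|
          ≤ ENNReal.ofReal (Cφ * ∫ t in Set.uIoc a y, |deriv γ t|) :=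
            ENNReal.ofReal_le_ofReal
              (le_trans e1 (mul_le_mul_of_nonneg_left e3 hCφ0))
        _ = ENNReal.ofReal Cφ * ENNReal.ofReal (∫ t in Set.uIoc a y, |deriv γ t|) :=
            ENNReal.ofReal_mul hCφ0
        _ = ENNReal.ofReal Cφ * ∫⁻ t in Set.uIoc a y, ENNReal.ofReal |deriv γ t| := by
            rw [ofReal_integral_eq_lintegral_ofReal (hγ'c.abs.integrableOn_uIoc)
              (Filter.Eventually.of_forall fun t => abs_nonneg _)]
        _ = _ := by simp_rw [← Real.norm_eq_abs, ofReal_norm, enorm_eq_nnnorm]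
    have e5 := my_jensen (volume.restrict (Set.uIoc a y))
      (fun t => (‖deriv γ t‖₊ : ℝ≥0∞))
      hγ'c.measurable.nnnorm.coe_nnreal_ennreal.aemeasurable hp
    rw [Measure.restrict_apply_univ] at e5
    have hvol : volume (Set.uIoc a y) ≤ ENNReal.ofReal M := by
      rw [Set.uIoc, Real.volume_Ioc]
      refine ENNReal.ofReal_le_ofReal ?_
      rw [max_sub_min_eq_abs]
      have e : y - a = γ y := by rw [ha]; ring
      rw [e]
      exact hbdd y
    calc (‖φ y - φ (a + γ a)‖₊ : ℝ≥0∞) ^ p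
        ≤ (ENNReal.ofReal Cφ * ∫⁻ t in Set.uIoc a y, (‖deriv γ t‖₊ : ℝ≥0∞)) ^ p :=
          ENNReal.rpow_le_rpow e4 hp0.le
      _ = (ENNReal.ofReal Cφ) ^ p *
            (∫⁻ t in Set.uIoc a y, (‖deriv γ t‖₊ : ℝ≥0∞)) ^ p :=
          ENNReal.mul_rpow_of_nonneg _ _ hp0.le
      _ ≤ (ENNReal.ofReal Cφ) ^ p * ((ENNReal.ofReal M) ^ (p - 1) *
            ∫⁻ t in Set.uIoc a y, (‖deriv γ t‖₊ : ℝ≥0∞) ^ p) := by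
          refine mul_le_mul_right (le_trans e5 (mul_le_mul_left
            (ENNReal.rpow_le_rpow hvol (by linarith)) _)) _
  -- Fubini bound
  have FUB : (∫⁻ y, ∫⁻ t in Set.uIoc (y - γ y) y, (‖deriv γ t‖₊ : ℝ≥0∞) ^ p) ≤
      ENNReal.ofReal M * ∫⁻ t, (‖deriv γ t‖₊ : ℝ≥0∞) ^ p := by
    have hS : MeasurableSet {z : ℝ × ℝ | z.2 ∈ Set.uIoc (z.1 - γ z.1) z.1} := by
      have : {z : ℝ × ℝ | z.2 ∈ Set.uIoc (z.1 - γ z.1) z.1} =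
          {z : ℝ × ℝ | (z.1 - γ z.1) ⊓ z.1 < z.2} ∩ {z : ℝ × ℝ | z.2 ≤ (z.1 - γ z.1) ⊔ z.1} := by
        ext z; simp [Set.uIoc, Set.mem_Ioc]
      rw [this]
      have hcont : Continuous fun z : ℝ × ℝ => z.1 - γ z.1 :=
        continuous_fst.sub (hγc.comp continuous_fst)
      exact (measurableSet_lt ((hcont.min continuous_fst).measurable) measurable_snd).inter
        (measurableSet_le measurable_snd ((hcont.max continuous_fst).measurable))
    have slice : ∀ t : ℝ, volume {y : ℝ | t ∈ Set.uIoc (y - γ y) y} ≤ ENNReal.ofReal M := by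
      intro t
      have hsub : {y : ℝ | t ∈ Set.uIoc (y - γ y) y} ⊆ Set.uIcc t (t + γt t) := by
        intro y hy
        rcases Set.mem_uIoc.1 hy with ⟨h1, h2⟩ | ⟨h1, h2⟩
        · have : y < t + γt t := by
            have := hgmono.lt_iff_lt (a := y) (b := t + γt t)
            simp only [hinv₂] at this
            exact this.1 h1
          exact Set.mem_uIcc.2 (Or.inl ⟨h2, this.le⟩)
        · have : t + γt t ≤ y := by
            have := hgmono.le_iff_le (a := t + γt t) (b := y)
            simp only [hinv₂] at this
            exact this.1 h2
          exact Set.mem_uIcc.2 (Or.inr ⟨this, h1.le⟩)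
      calc volume {y : ℝ | t ∈ Set.uIoc (y - γ y) y} ≤ volume (Set.uIcc t (t + γt t)) :=
            measure_mono hsub
        _ = ENNReal.ofReal |t + γt t - t| := Real.volume_interval
        _ ≤ ENNReal.ofReal M := by
            refine ENNReal.ofReal_le_ofReal ?_
            have e : γ (t + γt t) = t + γt t - t := by have := hinv₂ t; linarith
            rw [← e]; exact hbdd _
    calc (∫⁻ y, ∫⁻ t in Set.uIoc (y - γ y) y, (‖deriv γ t‖₊ : ℝ≥0∞) ^ p)
        = ∫⁻ y, ∫⁻ t, {z : ℝ × ℝ | z.2 ∈ Set.uIoc (z.1 - γ z.1) z.1}.indicator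
            (fun z => (‖deriv γ z.2‖₊ : ℝ≥0∞) ^ p) (y, t) := by
          refine lintegral_congr fun y => ?_
          rw [← lintegral_indicator measurableSet_uIoc]
          refine lintegral_congr fun t => ?_
          by_cases ht : t ∈ Set.uIoc (y - γ y) y <;>
            simp [Set.indicator_apply, ht]
      _ = ∫⁻ t, ∫⁻ y, {z : ℝ × ℝ | z.2 ∈ Set.uIoc (z.1 - γ z.1) z.1}.indicator
            (fun z => (‖deriv γ z.2‖₊ : ℝ≥0∞) ^ p) (y, t) :=
          lintegral_lintegral_swap ((hFmeas.comp measurable_snd).indicator hS).aemeasurable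
      _ = ∫⁻ t, (‖deriv γ t‖₊ : ℝ≥0∞) ^ p * volume {y : ℝ | t ∈ Set.uIoc (y - γ y) y} := by
          refine lintegral_congr fun t => ?_
          have : ∀ y : ℝ, {z : ℝ × ℝ | z.2 ∈ Set.uIoc (z.1 - γ z.1) z.1}.indicator
              (fun z => (‖deriv γ z.2‖₊ : ℝ≥0∞) ^ p) (y, t) =
              {y : ℝ | t ∈ Set.uIoc (y - γ y) y}.indicator
                (fun _ => (‖deriv γ t‖₊ : ℝ≥0∞) ^ p) y := by
            intro y
            by_cases ht : t ∈ Set.uIoc (y - γ y) y <;>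
              simp [Set.indicator_apply, ht]
          simp_rw [this]
          have hms : MeasurableSet {y : ℝ | t ∈ Set.uIoc (y - γ y) y} := by
            have h' : Measurable fun y : ℝ => (y, t) := measurable_id.prodMk measurable_const
            exact h' hS
          rw [lintegral_indicator_const hms]
      _ ≤ ∫⁻ t, (‖deriv γ t‖₊ : ℝ≥0∞) ^ p * ENNReal.ofReal M :=
          lintegral_mono fun t => mul_le_mul_right (slice t) _
      _ = ENNReal.ofReal M * ∫⁻ t, (‖deriv γ t‖₊ : ℝ≥0∞) ^ p := by
          rw [lintegral_mul_const' _ _ ENNReal.ofReal_ne_top, mul_comm]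
  have stepB : eLpNorm (fun x => φ (x + γt x) - φ (x + γ x)) q volume ≤
      ENNReal.ofReal (Cφ * (1 + c) ^ (1 / p) * M) * eLpNorm (deriv γ) q volume := by
    rw [eLpNorm_eq_lintegral_rpow_enorm_toReal hq0 hqt, eLpNorm_eq_lintegral_rpow_enorm_toReal hq0 hqt, hqr]
    have key : (∫⁻ x, (‖φ (x + γt x) - φ (x + γ x)‖₊ : ℝ≥0∞) ^ p) ≤
        ENNReal.ofReal (1 + c) * ((ENNReal.ofReal Cφ) ^ p * ((ENNReal.ofReal M) ^ p *
          ∫⁻ t, (‖deriv γ t‖₊ : ℝ≥0∞) ^ p)) := by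
      calc (∫⁻ x, (‖φ (x + γt x) - φ (x + γ x)‖₊ : ℝ≥0∞) ^ p)
          = ∫⁻ y, ENNReal.ofReal |1 - deriv γ y| *
              (‖φ ((y - γ y) + γt (y - γ y)) - φ ((y - γ y) + γ (y - γ y))‖₊ : ℝ≥0∞) ^ p :=
            hCOV (fun x => (‖φ (x + γt x) - φ (x + γ x)‖₊ : ℝ≥0∞) ^ p)
        _ = ∫⁻ y, ENNReal.ofReal |1 - deriv γ y| *
              (‖φ y - φ ((y - γ y) + γ (y - γ y))‖₊ : ℝ≥0∞) ^ p := by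
            simp_rw [hinv₁]
        _ ≤ ENNReal.ofReal (1 + c) *
              ∫⁻ y, (‖φ y - φ ((y - γ y) + γ (y - γ y))‖₊ : ℝ≥0∞) ^ p := hONE _
        _ ≤ ENNReal.ofReal (1 + c) * ∫⁻ y, (ENNReal.ofReal Cφ) ^ p *
              ((ENNReal.ofReal M) ^ (p - 1) *
                ∫⁻ t in Set.uIoc (y - γ y) y, (‖deriv γ t‖₊ : ℝ≥0∞) ^ p) :=
            mul_le_mul_right (lintegral_mono fun y => pw y) _
        _ = ENNReal.ofReal (1 + c) * ((ENNReal.ofReal Cφ) ^ p * ((ENNReal.ofReal M) ^ (p - 1) *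
              ∫⁻ y, ∫⁻ t in Set.uIoc (y - γ y) y, (‖deriv γ t‖₊ : ℝ≥0∞) ^ p)) := by
            rw [lintegral_const_mul' _ _
                (ENNReal.rpow_ne_top_of_nonneg (by linarith) ENNReal.ofReal_ne_top),
              lintegral_const_mul' _ _
                (ENNReal.rpow_ne_top_of_nonneg (by linarith) ENNReal.ofReal_ne_top)]
        _ ≤ ENNReal.ofReal (1 + c) * ((ENNReal.ofReal Cφ) ^ p * ((ENNReal.ofReal M) ^ (p - 1) *
              (ENNReal.ofReal M * ∫⁻ t, (‖deriv γ t‖₊ : ℝ≥0∞) ^ p))) :=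
            mul_le_mul_right (mul_le_mul_right (mul_le_mul_right FUB _) _) _
        _ = ENNReal.ofReal (1 + c) * ((ENNReal.ofReal Cφ) ^ p * ((ENNReal.ofReal M) ^ p *
              ∫⁻ t, (‖deriv γ t‖₊ : ℝ≥0∞) ^ p)) := by
            have em : (ENNReal.ofReal M) ^ (p - 1) * ENNReal.ofReal M =
                (ENNReal.ofReal M) ^ p := by
              calc (ENNReal.ofReal M) ^ (p - 1) * ENNReal.ofReal M
                  = (ENNReal.ofReal M) ^ (p - 1) * (ENNReal.ofReal M) ^ (1:ℝ) := by
                    rw [ENNReal.rpow_one]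
                _ = (ENNReal.ofReal M) ^ (p - 1 + 1) :=
                    (ENNReal.rpow_add_of_nonneg _ _ (by linarith) zero_le_one).symm
                _ = (ENNReal.ofReal M) ^ p := by norm_num
            rw [← mul_assoc ((ENNReal.ofReal M) ^ (p - 1)), em]
    calc (∫⁻ x, (‖φ (x + γt x) - φ (x + γ x)‖₊ : ℝ≥0∞) ^ p) ^ (1 / p)
        ≤ (ENNReal.ofReal (1 + c) * ((ENNReal.ofReal Cφ) ^ p * ((ENNReal.ofReal M) ^ p *
            ∫⁻ t, (‖deriv γ t‖₊ : ℝ≥0∞) ^ p))) ^ (1 / p) :=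
          ENNReal.rpow_le_rpow key (by positivity)
      _ = ENNReal.ofReal ((1 + c) ^ (1 / p)) * (ENNReal.ofReal Cφ * (ENNReal.ofReal M *
            (∫⁻ t, (‖deriv γ t‖₊ : ℝ≥0∞) ^ p) ^ (1 / p))) := by
          rw [ENNReal.mul_rpow_of_nonneg _ _ (by positivity),
            ENNReal.mul_rpow_of_nonneg _ _ (by positivity),
            ENNReal.mul_rpow_of_nonneg _ _ (by positivity),
            ← ENNReal.rpow_mul, ← ENNReal.rpow_mul,
            mul_one_div_cancel (ne_of_gt hp0), ENNReal.rpow_one, ENNReal.rpow_one,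
            ← ENNReal.ofReal_rpow_of_pos h1c]
      _ = ENNReal.ofReal (Cφ * (1 + c) ^ (1 / p) * M) *
            (∫⁻ t, (‖deriv γ t‖₊ : ℝ≥0∞) ^ p) ^ (1 / p) := by
          rw [ENNReal.ofReal_mul (by positivity), ENNReal.ofReal_mul hCφ0]
          ring
  calc eLpNorm (fun x => ψ x - φ (x + γ x)) q volume
      = eLpNorm ((fun x => (fun y => ψ (y - γ y) - φ y) (x + γt x)) +
          fun x => φ (x + γt x) - φ (x + γ x)) q volume := by rw [← hsplit]
    _ ≤ eLpNorm (fun x => (fun y => ψ (y - γ y) - φ y) (x + γt x)) q volume +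
          eLpNorm (fun x => φ (x + γt x) - φ (x + γ x)) q volume :=
        eLpNorm_add_le (hAmeas.comp hhmeas).aestronglyMeasurable
          ((hφc.measurable.comp hhmeas).sub
            (hφc.comp (continuous_id.add hγc)).measurable).aestronglyMeasurable hq1
    _ ≤ _ := add_le_add stepA stepB
end
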